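/- arXiv:1906.02746 — 2 statements merged into one kernel-verified Lean document; each statement's English description precedes it below -/
import Mathlib

section
/- Let H = ηp C + Z with ‖Z‖₂ ≤ Δ and suppose Δ ≤ ηp‖r − αe‖₂√n / 3. Let û₁, û₂ ∈ ℝ^n be orthonormal vectors with H Hᵀ ûᵢ = σ̂ᵢ² ûᵢ, where σ̂₁ ≥ σ̂₂ are the two largest singular values of H, and set Û = [û₁ û₂], U = [u₁ u₂]. Then there exists an orthogonal matrix O* ∈ ℝ^{2×2} such that ‖Û − U O*‖₂ ≤ 3Δ / (ηp·√n·‖r − αe‖₂). -/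
open Matrix MeasureTheory ProbabilityTheory Real

noncomputable section

/-- Euclidean (ℓ₂) norm of a vector in ℝ^n. -/
def norm2 {n : ℕ} (x : Fin n → ℝ) : ℝ := Real.sqrt (∑ i, x i ^ 2)

/-- Entrywise maximum absolute value (ℓ_∞ norm) of a vector in ℝ^n. -/
def normInf {n : ℕ} (x : Fin n → ℝ) : ℝ := ⨆ i, |x i|

/-- Euclidean inner product on ℝ^n. -/
def inner2 {n : ℕ} (x y : Fin n → ℝ) : ℝ := ∑ i, x i * y i

/-- Spectral norm (ℓ₂ operator norm) of a real matrix. -/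
def specNorm {m n : ℕ} (A : Matrix (Fin m) (Fin n) ℝ) : ℝ :=
  ⨆ x : {x : Fin n → ℝ // norm2 x ≤ 1}, norm2 (A.mulVec x.1)

/-- Max-norm: maximum absolute value of the entries of a matrix. -/
def maxNorm {m n : ℕ} (A : Matrix (Fin m) (Fin n) ℝ) : ℝ :=
  ⨆ q : Fin m × Fin n, |A q.1 q.2|

/-- The n×2 matrix with columns u and v. -/
def twoCols {n : ℕ} (u v : Fin n → ℝ) : Matrix (Fin n) (Fin 2) ℝ :=
  Matrix.of fun i j => ![u i, v i] j

/-- The all-ones vector in ℝ^n. -/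
def onesVec (n : ℕ) : Fin n → ℝ := fun _ => 1

/-- `σ1 ≥ σ2 ≥ 0` are the two largest singular values of `H`, with corresponding
orthonormal left singular vectors `u1, u2` (eigenvectors of `H Hᵀ`). -/
def IsTopTwoSingular {n : ℕ} (H : Matrix (Fin n) (Fin n) ℝ)
    (σ1 σ2 : ℝ) (u1 u2 : Fin n → ℝ) : Prop :=
  0 ≤ σ2 ∧ σ2 ≤ σ1 ∧
  inner2 u1 u1 = 1 ∧ inner2 u2 u2 = 1 ∧ inner2 u1 u2 = 0 ∧
  (H * Hᵀ).mulVec u1 = σ1 ^ 2 • u1 ∧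
  (H * Hᵀ).mulVec u2 = σ2 ^ 2 • u2 ∧
  ∀ v : Fin n → ℝ, inner2 v u1 = 0 → inner2 v u2 = 0 →
    inner2 ((H * Hᵀ).mulVec v) v ≤ σ2 ^ 2 * inner2 v v

/-- The uniform probability measure on the interval [−M, M]. -/
def unifIcc (M : ℝ) : Measure ℝ :=
  (ENNReal.ofReal (2 * M))⁻¹ • volume.restrict (Set.Icc (-M) M)

/-- The ERO mixture law of a single pairwise measurement `R_{ij}` (with `a = r_i`, `b = r_j`):
`a − b` w.p. `ηp`, uniform on `[−M, M]` w.p. `(1−η)p`, and `0` w.p. `1−p`. -/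
def EROmix (M p η a b : ℝ) : Measure ℝ :=
  ENNReal.ofReal (η * p) • Measure.dirac (a - b) +
    ENNReal.ofReal ((1 - η) * p) • unifIcc M +
    ENNReal.ofReal (1 - p) • Measure.dirac (0 : ℝ)

/-- The Erdős–Rényi Outliers (ERO) model: `H` is skew-symmetric with zero diagonal, the
above-diagonal entries are jointly independent, and each `H_{ij}` (i < j) has the ERO
mixture law. -/
structure IsEROModel {Ω : Type} [MeasurableSpace Ω] (P : Measure Ω)
    {n : ℕ} (M p η : ℝ) (r : Fin n → ℝ)
    (H : Ω → Matrix (Fin n) (Fin n) ℝ) : Prop where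
  diag : ∀ ω i, H ω i i = 0
  skew : ∀ ω i j, H ω j i = - H ω i j
  meas : ∀ i j, Measurable fun ω => H ω i j
  indep : iIndepFun
    (fun (q : {q : Fin n × Fin n // q.1 < q.2}) ω => H ω q.1.1 q.1.2) P
  law : ∀ i j : Fin n, i < j →
    Measure.map (fun ω => H ω i j) P = EROmix M p η (r i) (r j)


namespace Aux
variable {m n : ℕ}


lemma inner2_comm (x y : Fin n → ℝ) : inner2 x y = inner2 y x := by
  simp [inner2, mul_comm]

lemma inner2_self_nonneg (x : Fin n → ℝ) : 0 ≤ inner2 x x := by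
  apply Finset.sum_nonneg; intro i _; exact mul_self_nonneg _

lemma norm2_nonneg (x : Fin n → ℝ) : 0 ≤ norm2 x := Real.sqrt_nonneg _

lemma norm2_eq_sqrt_inner (x : Fin n → ℝ) : norm2 x = Real.sqrt (inner2 x x) := by
  simp [norm2, inner2, sq]

lemma sq_norm2 (x : Fin n → ℝ) : norm2 x ^ 2 = inner2 x x := by
  rw [norm2_eq_sqrt_inner, Real.sq_sqrt (inner2_self_nonneg x)]

lemma inner2_add_left (x y z : Fin n → ℝ) : inner2 (x + y) z = inner2 x z + inner2 y z := by
  simp [inner2, add_mul, Finset.sum_add_distrib]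

lemma inner2_add_right (x y z : Fin n → ℝ) : inner2 x (y + z) = inner2 x y + inner2 x z := by
  simp [inner2, mul_add, Finset.sum_add_distrib]

lemma inner2_sub_left (x y z : Fin n → ℝ) : inner2 (x - y) z = inner2 x z - inner2 y z := by
  simp [inner2, sub_mul, Finset.sum_sub_distrib]

lemma inner2_sub_right (x y z : Fin n → ℝ) : inner2 x (y - z) = inner2 x y - inner2 x z := by
  simp [inner2, mul_sub, Finset.sum_sub_distrib]

lemma inner2_smul_left (c : ℝ) (x y : Fin n → ℝ) : inner2 (c • x) y = c * inner2 x y := by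
  simp [inner2, Finset.mul_sum, mul_assoc]

lemma inner2_smul_right (c : ℝ) (x y : Fin n → ℝ) : inner2 x (c • y) = c * inner2 x y := by
  simp [inner2, Finset.mul_sum]; apply Finset.sum_congr rfl; intros; ring

lemma abs_inner2_le (x y : Fin n → ℝ) : |inner2 x y| ≤ norm2 x * norm2 y := by
  have h := Finset.sum_mul_sq_le_sq_mul_sq Finset.univ x y
  have h2 : |inner2 x y| = Real.sqrt ((inner2 x y) ^ 2) := by
    rw [Real.sqrt_sq_eq_abs]
  rw [h2, norm2, norm2, ← Real.sqrt_mul (by positivity)]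
  exact Real.sqrt_le_sqrt h

lemma inner2_le (x y : Fin n → ℝ) : inner2 x y ≤ norm2 x * norm2 y :=
  le_trans (le_abs_self _) (abs_inner2_le x y)

lemma norm2_smul (c : ℝ) (x : Fin n → ℝ) : norm2 (c • x) = |c| * norm2 x := by
  rw [norm2_eq_sqrt_inner, inner2_smul_left, inner2_smul_right, ← mul_assoc,
    Real.sqrt_mul (mul_self_nonneg c), ← norm2_eq_sqrt_inner, ← Real.sqrt_mul_self (abs_nonneg c),
    ← abs_mul_abs_self c, Real.sqrt_mul_self (abs_nonneg c)]

lemma norm2_add_le (x y : Fin n → ℝ) : norm2 (x + y) ≤ norm2 x + norm2 y := by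
  have h1 : norm2 (x + y) ^ 2 ≤ (norm2 x + norm2 y) ^ 2 := by
    rw [sq_norm2, inner2_add_left, inner2_add_right, inner2_add_right]
    have := inner2_le x y
    have h2 := sq_norm2 x; have h3 := sq_norm2 y
    have := inner2_comm y x
    nlinarith
  have := norm2_nonneg (x + y)
  nlinarith [norm2_nonneg x, norm2_nonneg y]

lemma norm2_eq_of_sq_eq {x : Fin n → ℝ} {c : ℝ} (hc : 0 ≤ c) (h : norm2 x ^ 2 = c ^ 2) :
    norm2 x = c := by
  nlinarith [norm2_nonneg x]

lemma norm2_pos_of_ne_zero {x : Fin n → ℝ} (h : x ≠ 0) : 0 < norm2 x := by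
  rcases (norm2_nonneg x).lt_or_eq with h1 | h1
  · exact h1
  · exfalso; apply h
    have h2 : inner2 x x = 0 := by
      have := sq_norm2 x; rw [← h1] at this; simpa using this.symm
    funext i
    have hall : ∀ i ∈ Finset.univ, x i * x i = 0 := by
      intro i _
      have := Finset.sum_eq_zero_iff_of_nonneg (fun i _ => mul_self_nonneg (x i)) |>.1 h2
      exact this i (Finset.mem_univ i)
    have := hall i (Finset.mem_univ i)
    simpa [mul_self_eq_zero] using this


/-- Frobenius bound on the action of a matrix. -/
lemma norm2_mulVec_le_frob (A : Matrix (Fin m) (Fin n) ℝ) (x : Fin n → ℝ) :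
    norm2 (A.mulVec x) ≤ Real.sqrt (∑ i, ∑ j, A i j ^ 2) * norm2 x := by
  rw [norm2, norm2, ← Real.sqrt_mul (by positivity)]
  apply Real.sqrt_le_sqrt
  have h1 : ∀ i, (A.mulVec x i) ^ 2 ≤ (∑ j, A i j ^ 2) * ∑ j, x j ^ 2 := by
    intro i
    have := Finset.sum_mul_sq_le_sq_mul_sq Finset.univ (fun j => A i j) x
    simpa [Matrix.mulVec, dotProduct] using this
  calc ∑ i, (A.mulVec x i) ^ 2 ≤ ∑ i, (∑ j, A i j ^ 2) * ∑ j, x j ^ 2 :=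
        Finset.sum_le_sum fun i _ => h1 i
    _ = (∑ i, ∑ j, A i j ^ 2) * ∑ j, x j ^ 2 := by rw [Finset.sum_mul]

instance : Nonempty {x : Fin n → ℝ // norm2 x ≤ 1} :=
  ⟨⟨0, by simp [norm2]⟩⟩

lemma specNorm_bddAbove (A : Matrix (Fin m) (Fin n) ℝ) :
    BddAbove (Set.range fun x : {x : Fin n → ℝ // norm2 x ≤ 1} => norm2 (A.mulVec x.1)) := by
  refine ⟨Real.sqrt (∑ i, ∑ j, A i j ^ 2), ?_⟩
  rintro y ⟨x, rfl⟩
  calc norm2 (A.mulVec x.1) ≤ Real.sqrt (∑ i, ∑ j, A i j ^ 2) * norm2 x.1 :=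
        norm2_mulVec_le_frob A x.1
    _ ≤ Real.sqrt (∑ i, ∑ j, A i j ^ 2) * 1 := by
        apply mul_le_mul_of_nonneg_left x.2 (Real.sqrt_nonneg _)
    _ = _ := mul_one _

lemma specNorm_nonneg (A : Matrix (Fin m) (Fin n) ℝ) : 0 ≤ specNorm A := by
  have := le_ciSup (specNorm_bddAbove A) (⟨0, by simp [norm2]⟩ : {x : Fin n → ℝ // norm2 x ≤ 1})
  exact le_trans (norm2_nonneg _) this

lemma norm2_mulVec_le (A : Matrix (Fin m) (Fin n) ℝ) (x : Fin n → ℝ) :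
    norm2 (A.mulVec x) ≤ specNorm A * norm2 x := by
  rcases eq_or_ne x 0 with rfl | hx
  · simp [Matrix.mulVec_zero, norm2]
  · have hx' : 0 < norm2 x := by
      rcases (norm2_nonneg x).lt_or_eq with h | h
      · exact h
      · exfalso
        -- norm2 x = 0 → x = 0
        have h2 : inner2 x x = 0 := by rw [← sq_norm2, ← h]; ring
        apply hx; funext i
        have hall := (Finset.sum_eq_zero_iff_of_nonneg
          (fun i (_ : i ∈ Finset.univ) => mul_self_nonneg (x i))).1 h2 i (Finset.mem_univ i)
        simpa [mul_self_eq_zero] using hall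
    set y : Fin n → ℝ := (norm2 x)⁻¹ • x with hy
    have hy1 : norm2 y ≤ 1 := by
      rw [hy, norm2_smul, abs_of_nonneg (by positivity)]
      rw [inv_mul_cancel₀ hx'.ne']
    have h3 : norm2 (A.mulVec y) ≤ specNorm A :=
      le_ciSup (specNorm_bddAbove A) (⟨y, hy1⟩ : {x : Fin n → ℝ // norm2 x ≤ 1})
    have h4 : A.mulVec y = (norm2 x)⁻¹ • A.mulVec x := by
      rw [hy, Matrix.mulVec_smul]
    rw [h4, norm2_smul, abs_of_nonneg (by positivity)] at h3
    calc norm2 (A.mulVec x) = norm2 x * ((norm2 x)⁻¹ * norm2 (A.mulVec x)) := by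
          field_simp
      _ ≤ norm2 x * specNorm A := by
          apply mul_le_mul_of_nonneg_left h3 (norm2_nonneg x)
      _ = specNorm A * norm2 x := mul_comm _ _

lemma inner2_transpose_mulVec (A : Matrix (Fin m) (Fin n) ℝ) (x : Fin m → ℝ) (y : Fin n → ℝ) :
    inner2 (Aᵀ.mulVec x) y = inner2 x (A.mulVec y) := by
  simp only [inner2, Matrix.mulVec, dotProduct, Matrix.transpose_apply,
    Finset.sum_mul, Finset.mul_sum]
  rw [Finset.sum_comm]
  apply Finset.sum_congr rfl; intros
  apply Finset.sum_congr rfl; intros; ring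

lemma norm2_transpose_mulVec_le (A : Matrix (Fin m) (Fin n) ℝ) (x : Fin m → ℝ) :
    norm2 (Aᵀ.mulVec x) ≤ specNorm A * norm2 x := by
  set y := Aᵀ.mulVec x with hy
  rcases (norm2_nonneg y).lt_or_eq with h | h
  · have key : norm2 y ^ 2 ≤ norm2 x * (specNorm A * norm2 y) := by
      rw [sq_norm2]
      have h1 : inner2 y y = inner2 x (A.mulVec y) := by
        rw [hy]; exact inner2_transpose_mulVec A x y
      rw [h1]
      calc inner2 x (A.mulVec y) ≤ norm2 x * norm2 (A.mulVec y) := inner2_le _ _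
        _ ≤ norm2 x * (specNorm A * norm2 y) := by
            apply mul_le_mul_of_nonneg_left (norm2_mulVec_le A y) (norm2_nonneg x)
    nlinarith
  · rw [← h]; exact mul_nonneg (specNorm_nonneg A) (norm2_nonneg x)

lemma specNorm_le_frob (A : Matrix (Fin m) (Fin n) ℝ) :
    specNorm A ≤ Real.sqrt (∑ i, ∑ j, A i j ^ 2) := by
  apply ciSup_le
  intro x
  calc norm2 (A.mulVec x.1) ≤ Real.sqrt (∑ i, ∑ j, A i j ^ 2) * norm2 x.1 :=
        norm2_mulVec_le_frob A x.1
    _ ≤ Real.sqrt (∑ i, ∑ j, A i j ^ 2) * 1 :=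
        mul_le_mul_of_nonneg_left x.2 (Real.sqrt_nonneg _)
    _ = _ := mul_one _


lemma vecMulVec_mulVec' (a b x : Fin n → ℝ) :
    (vecMulVec a b).mulVec x = inner2 b x • a := by
  funext i
  simp [Matrix.vecMulVec, Matrix.mulVec, dotProduct, inner2, Finset.mul_sum,
    Finset.sum_mul, mul_comm, mul_assoc, mul_left_comm]

/-- Contraction property of the orthogonal projection complement. -/
lemma normQ_le (u₁ u₂ : Fin n → ℝ) (h11 : inner2 u₁ u₁ = 1) (h22 : inner2 u₂ u₂ = 1)
    (h12 : inner2 u₁ u₂ = 0) (x : Fin n → ℝ) :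
    norm2 (x - (inner2 u₁ x • u₁ + inner2 u₂ x • u₂)) ≤ norm2 x := by
  rw [norm2_eq_sqrt_inner, norm2_eq_sqrt_inner]
  apply Real.sqrt_le_sqrt
  have h21 : inner2 u₂ u₁ = 0 := by rw [inner2_comm]; exact h12
  have c1 : inner2 x u₁ = inner2 u₁ x := inner2_comm _ _
  have c2 : inner2 x u₂ = inner2 u₂ x := inner2_comm _ _
  simp only [inner2_sub_left, inner2_sub_right, inner2_add_left, inner2_add_right,
    inner2_smul_left, inner2_smul_right, h11, h22, h12, h21, c1, c2]
  nlinarith [sq_nonneg (inner2 u₁ x), sq_nonneg (inner2 u₂ x)]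


/-- Key deflation bound: an eigenvector of HHᵀ is close to span{u₁,u₂}. -/
lemma key_bound (u₁ u₂ : Fin n → ℝ)
    (h11 : inner2 u₁ u₁ = 1) (h22 : inner2 u₂ u₂ = 1) (h12 : inner2 u₁ u₂ = 0)
    (s Δ : ℝ) (Z H : Matrix (Fin n) (Fin n) ℝ)
    (hZ : ∀ x, norm2 (Z.mulVec x) ≤ Δ * norm2 x)
    (hH : H = s • (vecMulVec u₂ u₁ - vecMulVec u₁ u₂) + Z)
    (σ : ℝ) (v : Fin n → ℝ) (hv : inner2 v v = 1)
    (heig : (H * Hᵀ).mulVec v = σ ^ 2 • v) (hσ : 0 < σ) :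
    norm2 (v - (inner2 u₁ v • u₁ + inner2 u₂ v • u₂)) ≤ Δ / σ := by
  have h21 : inner2 u₂ u₁ = 0 := by rw [inner2_comm]; exact h12
  set y := Hᵀ.mulVec v with hy
  set w := Z.mulVec y with hw
  -- mulVec formula for H
  have hHmul : H.mulVec y = (s * inner2 u₁ y) • u₂ - (s * inner2 u₂ y) • u₁ + Z.mulVec y := by
    rw [hH, Matrix.add_mulVec, Matrix.smul_mulVec, Matrix.sub_mulVec,
      vecMulVec_mulVec', vecMulVec_mulVec']
    module
  have heig' : H.mulVec y = σ ^ 2 • v := by rw [hy, Matrix.mulVec_mulVec]; exact heig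
  have heq : σ ^ 2 • v = (s * inner2 u₁ y) • u₂ - (s * inner2 u₂ y) • u₁ + w := by
    rw [← heig', hHmul, ← hw]
  set c₁ := inner2 u₁ y
  set c₂ := inner2 u₂ y
  -- inner products of u's with σ²v
  have e1 : σ ^ 2 * inner2 u₁ v = -(s * c₂) + inner2 u₁ w := by
    have : inner2 u₁ (σ ^ 2 • v) = σ ^ 2 * inner2 u₁ v := inner2_smul_right _ _ _
    rw [← this, heq]
    simp only [inner2_add_right, inner2_sub_right, inner2_smul_right, h11, h12]
    ring
  have e2 : σ ^ 2 * inner2 u₂ v = s * c₁ + inner2 u₂ w := by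
    have : inner2 u₂ (σ ^ 2 • v) = σ ^ 2 * inner2 u₂ v := inner2_smul_right _ _ _
    rw [← this, heq]
    simp only [inner2_add_right, inner2_sub_right, inner2_smul_right, h22, h21]
    ring
  set q := v - (inner2 u₁ v • u₁ + inner2 u₂ v • u₂) with hq
  have hkey : σ ^ 2 • q = w - (inner2 u₁ w • u₁ + inner2 u₂ w • u₂) := by
    rw [hq]
    have expand : σ ^ 2 • (v - (inner2 u₁ v • u₁ + inner2 u₂ v • u₂))
        = σ ^ 2 • v - ((σ ^ 2 * inner2 u₁ v) • u₁ + (σ ^ 2 * inner2 u₂ v) • u₂) := by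
      module
    rw [expand, heq, e1, e2]
    module
  -- norms
  have hnq : norm2 (σ ^ 2 • q) = σ ^ 2 * norm2 q := by
    rw [norm2_smul, abs_of_nonneg (sq_nonneg σ)]
  have hQw : norm2 (w - (inner2 u₁ w • u₁ + inner2 u₂ w • u₂)) ≤ norm2 w :=
    normQ_le u₁ u₂ h11 h22 h12 w
  have hny : norm2 y = σ := by
    apply norm2_eq_of_sq_eq (le_of_lt hσ)
    rw [sq_norm2]
    have : inner2 y y = inner2 v (H.mulVec y) := by
      rw [hy]; exact inner2_transpose_mulVec H v y
    rw [this, hy, Matrix.mulVec_mulVec, heig, inner2_smul_right, hv, mul_one]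
  have hnw : norm2 w ≤ Δ * σ := by
    rw [← hny]; exact hZ y
  have : σ ^ 2 * norm2 q ≤ Δ * σ := by
    rw [← hnq, hkey]; exact le_trans hQw hnw
  rw [le_div_iff₀ hσ]
  nlinarith [norm2_nonneg q]


lemma vecMulVec_transpose' (a b : Fin n → ℝ) : (vecMulVec a b)ᵀ = vecMulVec b a := by
  ext i j; simp [Matrix.vecMulVec, Matrix.transpose_apply, mul_comm]

set_option maxHeartbeats 1000000 in
/-- Lower bound on the second singular value. -/
lemma sigma2_lower (u₁ u₂ : Fin n → ℝ)
    (h11 : inner2 u₁ u₁ = 1) (h22 : inner2 u₂ u₂ = 1) (h12 : inner2 u₁ u₂ = 0)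
    (s Δ : ℝ) (hs : 0 < s) (hΔ0 : 0 ≤ Δ) (hΔs : Δ ≤ s)
    (Z H : Matrix (Fin n) (Fin n) ℝ)
    (hZt : ∀ x, norm2 (Zᵀ.mulVec x) ≤ Δ * norm2 x)
    (hH : H = s • (vecMulVec u₂ u₁ - vecMulVec u₁ u₂) + Z)
    (σ1 σ2 : ℝ) (w₁ w₂ : Fin n → ℝ)
    (htop : IsTopTwoSingular H σ1 σ2 w₁ w₂) :
    s - Δ ≤ σ2 := by
  obtain ⟨hσ2nn, hσ21, hw11, hw22, hw12, hHw1, hHw2, hmin⟩ := htop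
  have h21 : inner2 u₂ u₁ = 0 := by rw [inner2_comm]; exact h12
  -- find a unit-ish vector in span{u₁,u₂} orthogonal to w₁
  obtain ⟨a, b, hab, hperp⟩ :
      ∃ a b : ℝ, ¬(a = 0 ∧ b = 0) ∧ inner2 w₁ (a • u₁ + b • u₂) = 0 := by
    by_cases hc : inner2 w₁ u₁ = 0 ∧ inner2 w₁ u₂ = 0
    · refine ⟨1, 0, by simp, ?_⟩
      simp only [inner2_add_right, inner2_smul_right, hc.1, hc.2]; ring
    · refine ⟨inner2 w₁ u₂, -inner2 w₁ u₁, ?_, ?_⟩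
      · intro hz
        exact hc ⟨neg_eq_zero.mp hz.2, hz.1⟩
      · simp only [inner2_add_right, inner2_smul_right]; ring
  set w : Fin n → ℝ := a • u₁ + b • u₂ with hwdef
  have hww : inner2 w w = a ^ 2 + b ^ 2 := by
    simp only [hwdef, inner2_add_left, inner2_add_right, inner2_smul_left, inner2_smul_right,
      h11, h22, h12, h21]; ring
  have hwpos : 0 < a ^ 2 + b ^ 2 := by
    rcases not_and_or.mp hab with h | h
    · have ha2 : 0 < a ^ 2 := lt_of_le_of_ne (sq_nonneg a) (Ne.symm (pow_ne_zero 2 h))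
      nlinarith [sq_nonneg b]
    · have hb2 : 0 < b ^ 2 := lt_of_le_of_ne (sq_nonneg b) (Ne.symm (pow_ne_zero 2 h))
      nlinarith [sq_nonneg a]
  set β := inner2 w₂ w with hβ
  set v : Fin n → ℝ := w - β • w₂ with hv
  have hw1w : inner2 w w₁ = 0 := by rw [inner2_comm]; exact hperp
  have h21' : inner2 w₂ w₁ = 0 := by rw [inner2_comm]; exact hw12
  have hv1 : inner2 v w₁ = 0 := by
    rw [hv, inner2_sub_left, inner2_smul_left, hw1w, h21']; ring
  have hw2w : inner2 w w₂ = β := by rw [hβ, inner2_comm]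
  have hv2 : inner2 v w₂ = 0 := by
    rw [hv, inner2_sub_left, inner2_smul_left, hw2w, hw22]; ring
  have hvw2 : inner2 w₂ v = 0 := by rw [inner2_comm]; exact hv2
  -- the quadratic form at w
  have hsym : ∀ x z : Fin n → ℝ,
      inner2 ((H * Hᵀ).mulVec x) z = inner2 x ((H * Hᵀ).mulVec z) := by
    intro x z
    have htr : (H * Hᵀ)ᵀ = H * Hᵀ := by
      rw [Matrix.transpose_mul, Matrix.transpose_transpose]
    calc inner2 ((H * Hᵀ).mulVec x) z = inner2 ((H * Hᵀ)ᵀ.mulVec x) z := by rw [htr]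
      _ = inner2 x ((H * Hᵀ).mulVec z) := inner2_transpose_mulVec _ _ _
  have hsplit : (H * Hᵀ).mulVec w = β • ((σ2 ^ 2) • w₂) + (H * Hᵀ).mulVec v := by
    have : w = β • w₂ + v := by rw [hv]; module
    calc (H * Hᵀ).mulVec w = (H * Hᵀ).mulVec (β • w₂ + v) := by rw [← this]
      _ = β • ((H * Hᵀ).mulVec w₂) + (H * Hᵀ).mulVec v := by
          rw [Matrix.mulVec_add, Matrix.mulVec_smul]
      _ = _ := by rw [hHw2]
  have hQub : inner2 ((H * Hᵀ).mulVec w) w ≤ σ2 ^ 2 * inner2 w w := by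
    have hcross : inner2 ((H * Hᵀ).mulVec v) w₂ = 0 := by
      rw [hsym v w₂, hHw2, inner2_smul_right, hv2]; ring
    have hmv := hmin v hv1 hv2
    have hwsplit : inner2 w w = β ^ 2 + inner2 v v := by
      have hwv : w = β • w₂ + v := by rw [hv]; module
      rw [hwv]
      simp only [inner2_add_left, inner2_add_right, inner2_smul_left, inner2_smul_right,
        hw22, hvw2, hv2]
      ring
    calc inner2 ((H * Hᵀ).mulVec w) w
        = inner2 (β • ((σ2 ^ 2) • w₂) + (H * Hᵀ).mulVec v) (β • w₂ + v) := by
          rw [← hsplit]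
          congr 1
          rw [hv]; module
      _ = β ^ 2 * σ2 ^ 2 * inner2 w₂ w₂ + β * σ2 ^ 2 * inner2 w₂ v
          + β * inner2 ((H * Hᵀ).mulVec v) w₂ + inner2 ((H * Hᵀ).mulVec v) v := by
          simp only [inner2_add_left, inner2_add_right, inner2_smul_left, inner2_smul_right]
          ring
      _ = β ^ 2 * σ2 ^ 2 + inner2 ((H * Hᵀ).mulVec v) v := by
          rw [hw22, hvw2, hcross]; ring
      _ ≤ β ^ 2 * σ2 ^ 2 + σ2 ^ 2 * inner2 v v := by linarith
      _ = σ2 ^ 2 * inner2 w w := by rw [hwsplit]; ring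
  -- lower bound on the quadratic form
  have hQlb : (s - Δ) ^ 2 * inner2 w w ≤ inner2 ((H * Hᵀ).mulVec w) w := by
    have hQnorm : inner2 ((H * Hᵀ).mulVec w) w = norm2 (Hᵀ.mulVec w) ^ 2 := by
      rw [sq_norm2]
      have : inner2 (Hᵀ.mulVec w) (Hᵀ.mulVec w) = inner2 w (H.mulVec (Hᵀ.mulVec w)) :=
        inner2_transpose_mulVec _ _ _
      rw [this, Matrix.mulVec_mulVec, inner2_comm]
    have hHt : Hᵀ.mulVec w = ((s * b) • u₁ - (s * a) • u₂) + Zᵀ.mulVec w := by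
      rw [hH]
      rw [Matrix.transpose_add, Matrix.transpose_smul, Matrix.transpose_sub,
        vecMulVec_transpose', vecMulVec_transpose']
      rw [Matrix.add_mulVec, Matrix.smul_mulVec, Matrix.sub_mulVec,
        vecMulVec_mulVec', vecMulVec_mulVec']
      have hu2w : inner2 u₂ w = b := by
        simp only [hwdef, inner2_add_right, inner2_smul_right, h22, h21]; ring
      have hu1w : inner2 u₁ w = a := by
        simp only [hwdef, inner2_add_right, inner2_smul_right, h11, h12]; ring
      rw [hu1w, hu2w]
      module
    set g : Fin n → ℝ := (s * b) • u₁ - (s * a) • u₂ with hg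
    have hng : norm2 g = s * Real.sqrt (a ^ 2 + b ^ 2) := by
      apply norm2_eq_of_sq_eq (by positivity)
      rw [sq_norm2]
      simp only [hg, inner2_sub_left, inner2_sub_right, inner2_smul_left, inner2_smul_right,
        h11, h22, h12, h21]
      rw [mul_pow, Real.sq_sqrt (le_of_lt hwpos)]
      ring
    have hnw : norm2 w = Real.sqrt (a ^ 2 + b ^ 2) := by
      rw [norm2_eq_sqrt_inner, hww]
    have htri : norm2 g - norm2 (Zᵀ.mulVec w) ≤ norm2 (Hᵀ.mulVec w) := by
      have := norm2_add_le (g + Zᵀ.mulVec w) (-(Zᵀ.mulVec w))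
      have hsimp : g + Zᵀ.mulVec w + -(Zᵀ.mulVec w) = g := by module
      rw [hsimp] at this
      have hneg : norm2 (-(Zᵀ.mulVec w)) = norm2 (Zᵀ.mulVec w) := by
        have : -(Zᵀ.mulVec w) = (-1 : ℝ) • (Zᵀ.mulVec w) := by module
        rw [this, norm2_smul]; simp
      rw [hneg] at this
      rw [hHt]; linarith
    have hZw : norm2 (Zᵀ.mulVec w) ≤ Δ * norm2 w := hZt w
    have hlow : (s - Δ) * norm2 w ≤ norm2 (Hᵀ.mulVec w) := by
      rw [hnw] at hZw ⊢
      rw [hng] at htri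
      linarith
    have h1 : ((s - Δ) * norm2 w) ^ 2 ≤ norm2 (Hᵀ.mulVec w) ^ 2 := by
      have h2 : 0 ≤ (s - Δ) * norm2 w := by
        apply mul_nonneg (by linarith) (norm2_nonneg w)
      nlinarith [norm2_nonneg (Hᵀ.mulVec w)]
    rw [hQnorm]
    calc (s - Δ) ^ 2 * inner2 w w = ((s - Δ) * norm2 w) ^ 2 := by
          rw [← sq_norm2]; ring
      _ ≤ _ := h1
  have hfin : (s - Δ) ^ 2 ≤ σ2 ^ 2 := by
    have := le_trans hQlb hQub
    rw [hww] at this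
    nlinarith
  nlinarith



set_option maxHeartbeats 1000000 in
lemma two_by_two (e11 e12 e21 e22 ε : ℝ) (hε0 : 0 ≤ ε) (hε : ε ≤ 1/2)
    (ha : 1 - ε^2 ≤ e11^2 + e21^2) (hb : 1 - ε^2 ≤ e12^2 + e22^2)
    (hcabs : |e11*e12 + e21*e22| ≤ ε^2) :
    ∃ O : Matrix (Fin 2) (Fin 2) ℝ, Oᵀ * O = 1 ∧
      (∀ j, O 0 j ^ 2 + O 1 j ^ 2 = 1) ∧
      2 - 2*ε^2 ≤ (e11 * O 0 0 + e21 * O 1 0) + (e12 * O 0 1 + e22 * O 1 1) := by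
  set a := e11^2 + e21^2 with hadef
  set b := e12^2 + e22^2 with hbdef
  set c := e11*e12 + e21*e22 with hcdef
  set d := e11*e22 - e12*e21 with hddef
  have hε2 : ε^2 ≤ 1/4 := by nlinarith
  have hc2 : c^2 ≤ ε^4 := by
    have h1 : c^2 = |c|^2 := (sq_abs c).symm
    nlinarith [abs_nonneg c]
  have hd2 : d^2 = a*b - c^2 := by rw [hadef, hbdef, hcdef, hddef]; ring
  have hd2low : 1 - 2*ε^2 ≤ d^2 := by nlinarith [sq_nonneg ε]
  set δ := |d| with hδdef
  have hδ2 : δ^2 = d^2 := sq_abs d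
  have hδpos : 0 < δ := by
    rw [hδdef, abs_pos]
    intro h
    rw [h] at hd2low
    nlinarith
  have hδlow : 1 - 2*ε^2 ≤ δ := by nlinarith [hδpos]
  have hmmpos : 0 < a + b + 2*δ := by nlinarith
  set m := Real.sqrt (a + b + 2*δ) with hmdef
  have hm2 : m^2 = a + b + 2*δ := Real.sq_sqrt (le_of_lt hmmpos)
  have hmpos : 0 < m := Real.sqrt_pos.mpr hmmpos
  have hmlow : 2 - 2*ε^2 ≤ m := by
    have hm2low : (2 - 2*ε^2)^2 ≤ m^2 := by nlinarith
    nlinarith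
  set p := e11*(b+δ) - e12*c with hpdef
  set q := -e11*c + e12*(a+δ) with hqdef
  set r := e21*(b+δ) - e22*c with hrdef
  set t := -e21*c + e22*(a+δ) with htdef
  have hP1 : p^2 + r^2 = δ^2*(a+b+2*δ) := by
    rw [hpdef, hrdef]
    linear_combination (-(b+2*δ)) * hδ2 + ((b+δ)^2 - c^2 + δ^2*0) * hd2 + (b + 2*δ) * hd2
  have hP2 : q^2 + t^2 = δ^2*(a+b+2*δ) := by
    rw [hqdef, htdef]
    linear_combination (-(a+2*δ)) * hδ2 + (a + 2*δ) * hd2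
  have hP3 : p*q + r*t = 0 := by
    rw [hpdef, hqdef, hrdef, htdef]
    linear_combination c * hδ2 - c * hd2
  have hPT : e11*p + e21*r + (e12*q + e22*t) = δ*(a+b+2*δ) := by
    rw [hpdef, hqdef, hrdef, htdef]
    linear_combination -2*hδ2 - 2*hd2
  have hδm : δ * m ≠ 0 := by positivity
  refine ⟨(δ*m)⁻¹ • !![p, q; r, t], ?_, ?_, ?_⟩
  · ext i j
    fin_cases i <;> fin_cases j <;>
      simp only [Matrix.mul_apply, Fin.sum_univ_two, Matrix.transpose_apply,
        Matrix.smul_apply, smul_eq_mul, Matrix.one_apply,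
        Matrix.cons_val', Matrix.cons_val_zero, Matrix.cons_val_one, Matrix.head_cons,
        Matrix.head_fin_const, Matrix.empty_val', Matrix.cons_val_fin_one, Matrix.of_apply] <;>
      norm_num <;> field_simp [hδpos.ne', hmpos.ne']
    · linear_combination hP1 - δ^2 * hm2
    · linear_combination hP3
    · linear_combination hP3
    · linear_combination hP2 - δ^2 * hm2
  · intro j
    fin_cases j <;>
      simp only [Matrix.smul_apply, smul_eq_mul, Fin.zero_eta, Fin.mk_one,
        Matrix.cons_val', Matrix.cons_val_zero, Matrix.cons_val_one, Matrix.head_cons,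
        Matrix.head_fin_const, Matrix.empty_val', Matrix.cons_val_fin_one, Matrix.of_apply] <;>
      field_simp [hδpos.ne', hmpos.ne']
    · linear_combination hP1 - δ^2 * hm2
    · linear_combination hP2 - δ^2 * hm2
  · have hval : (e11 * ((δ*m)⁻¹ * p) + e21 * ((δ*m)⁻¹ * r))
        + (e12 * ((δ*m)⁻¹ * q) + e22 * ((δ*m)⁻¹ * t)) = m := by
      calc (e11 * ((δ*m)⁻¹ * p) + e21 * ((δ*m)⁻¹ * r))
            + (e12 * ((δ*m)⁻¹ * q) + e22 * ((δ*m)⁻¹ * t))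
          = (δ*m)⁻¹ * (e11 * p + e21 * r + (e12 * q + e22 * t)) := by ring
        _ = (δ*m)⁻¹ * (δ * m^2) := by rw [hPT, hm2]
        _ = m := by field_simp [hδpos.ne', hmpos.ne']
    simp only [Matrix.smul_apply, smul_eq_mul,
      Matrix.cons_val', Matrix.cons_val_zero, Matrix.cons_val_one, Matrix.head_cons,
      Matrix.head_fin_const, Matrix.empty_val', Matrix.cons_val_fin_one, Matrix.of_apply]
    rw [hval]
    exact hmlow


set_option maxHeartbeats 1000000 in
lemma core (u₁ u₂ : Fin n → ℝ)
    (h11 : inner2 u₁ u₁ = 1) (h22 : inner2 u₂ u₂ = 1) (h12 : inner2 u₁ u₂ = 0)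
    (s Δ : ℝ) (hs : 0 < s) (hΔ0 : 0 ≤ Δ) (hΔs : 3 * Δ ≤ s)
    (Z H : Matrix (Fin n) (Fin n) ℝ)
    (hZ : ∀ x, norm2 (Z.mulVec x) ≤ Δ * norm2 x)
    (hZt : ∀ x, norm2 (Zᵀ.mulVec x) ≤ Δ * norm2 x)
    (hH : H = s • (vecMulVec u₂ u₁ - vecMulVec u₁ u₂) + Z)
    (σ1 σ2 : ℝ) (w₁ w₂ : Fin n → ℝ)
    (htop : IsTopTwoSingular H σ1 σ2 w₁ w₂) :
    ∃ O : Matrix (Fin 2) (Fin 2) ℝ, Oᵀ * O = 1 ∧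
      specNorm (twoCols w₁ w₂ - twoCols u₁ u₂ * O) ≤ 3 * Δ / s := by
  have h21 : inner2 u₂ u₁ = 0 := by rw [inner2_comm]; exact h12
  have hσ2low : s - Δ ≤ σ2 :=
    sigma2_lower u₁ u₂ h11 h22 h12 s Δ hs hΔ0 (by linarith) Z H hZt hH σ1 σ2 w₁ w₂ htop
  obtain ⟨hσ2nn, hσ21, hw11, hw22, hw12, hHw1, hHw2, hmin⟩ := htop
  have hsΔ : 0 < s - Δ := by linarith
  have hσ2pos : 0 < σ2 := by linarith
  have hσ1pos : 0 < σ1 := by linarith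
  set ε := Δ / (s - Δ) with hεdef
  have hε0 : 0 ≤ ε := div_nonneg hΔ0 (le_of_lt hsΔ)
  have hεhalf : ε ≤ 1/2 := by
    rw [hεdef, div_le_iff₀ hsΔ]; linarith
  -- per-eigenvector bounds
  have hq1 : norm2 (w₁ - (inner2 u₁ w₁ • u₁ + inner2 u₂ w₁ • u₂)) ≤ ε := by
    refine le_trans (key_bound u₁ u₂ h11 h22 h12 s Δ Z H hZ hH σ1 w₁ hw11 hHw1 hσ1pos) ?_
    rw [hεdef]
    exact div_le_div_of_nonneg_left hΔ0 hsΔ (by linarith)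
  have hq2 : norm2 (w₂ - (inner2 u₁ w₂ • u₁ + inner2 u₂ w₂ • u₂)) ≤ ε := by
    refine le_trans (key_bound u₁ u₂ h11 h22 h12 s Δ Z H hZ hH σ2 w₂ hw22 hHw2 hσ2pos) ?_
    rw [hεdef]
    exact div_le_div_of_nonneg_left hΔ0 hsΔ hσ2low
  -- entries of E
  set e11 := inner2 u₁ w₁ with he11
  set e21 := inner2 u₂ w₁ with he21
  set e12 := inner2 u₁ w₂ with he12
  set e22 := inner2 u₂ w₂ with he22
  set q₁ : Fin n → ℝ := w₁ - (e11 • u₁ + e21 • u₂) with hq₁def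
  set q₂ : Fin n → ℝ := w₂ - (e12 • u₁ + e22 • u₂) with hq₂def
  have hcomm1 : inner2 w₁ u₁ = e11 := by rw [inner2_comm]
  have hcomm2 : inner2 w₁ u₂ = e21 := by rw [inner2_comm]
  have hcomm3 : inner2 w₂ u₁ = e12 := by rw [inner2_comm]
  have hcomm4 : inner2 w₂ u₂ = e22 := by rw [inner2_comm]
  have hw21 : inner2 w₂ w₁ = 0 := by rw [inner2_comm]; exact hw12
  have hiq1 : inner2 q₁ q₁ = 1 - (e11^2 + e21^2) := by
    rw [hq₁def]
    simp only [inner2_sub_left, inner2_sub_right, inner2_add_left, inner2_add_right,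
      inner2_smul_left, inner2_smul_right, h11, h22, h12, h21, hw11,
      hcomm1, hcomm2, ← he11, ← he21]
    ring
  have hiq2 : inner2 q₂ q₂ = 1 - (e12^2 + e22^2) := by
    rw [hq₂def]
    simp only [inner2_sub_left, inner2_sub_right, inner2_add_left, inner2_add_right,
      inner2_smul_left, inner2_smul_right, h11, h22, h12, h21, hw22,
      hcomm3, hcomm4, ← he12, ← he22]
    ring
  have hiq12 : inner2 q₁ q₂ = -(e11*e12 + e21*e22) := by
    rw [hq₁def, hq₂def]
    simp only [inner2_sub_left, inner2_sub_right, inner2_add_left, inner2_add_right,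
      inner2_smul_left, inner2_smul_right, h11, h22, h12, h21, hw12,
      hcomm1, hcomm2, hcomm3, hcomm4, ← he11, ← he21, ← he12, ← he22]
    ring
  have ha : 1 - ε^2 ≤ e11^2 + e21^2 := by
    have h1 : inner2 q₁ q₁ ≤ ε^2 := by
      rw [← sq_norm2]
      exact pow_le_pow_left₀ (norm2_nonneg q₁) hq1 2
    rw [hiq1] at h1; linarith
  have hb : 1 - ε^2 ≤ e12^2 + e22^2 := by
    have h1 : inner2 q₂ q₂ ≤ ε^2 := by
      rw [← sq_norm2]
      exact pow_le_pow_left₀ (norm2_nonneg q₂) hq2 2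
    rw [hiq2] at h1; linarith
  have hcabs : |e11*e12 + e21*e22| ≤ ε^2 := by
    have h1 : |inner2 q₁ q₂| ≤ norm2 q₁ * norm2 q₂ := abs_inner2_le _ _
    have h2 : norm2 q₁ * norm2 q₂ ≤ ε^2 := by
      rw [sq]
      exact mul_le_mul hq1 hq2 (norm2_nonneg q₂) hε0
    rw [hiq12, abs_neg] at h1
    linarith
  obtain ⟨O, hOorth, hOcol, hOtr⟩ := two_by_two e11 e12 e21 e22 ε hε0 hεhalf ha hb hcabs
  refine ⟨O, hOorth, ?_⟩
  -- Frobenius bound on the difference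
  set D := twoCols w₁ w₂ - twoCols u₁ u₂ * O with hD
  have hDcol0 : ∀ i, D i 0 = w₁ i - (O 0 0 * u₁ i + O 1 0 * u₂ i) := by
    intro i
    simp [hD, twoCols, Matrix.mul_apply, Fin.sum_univ_two, Matrix.sub_apply]
    ring
  have hDcol1 : ∀ i, D i 1 = w₂ i - (O 0 1 * u₁ i + O 1 1 * u₂ i) := by
    intro i
    simp [hD, twoCols, Matrix.mul_apply, Fin.sum_univ_two, Matrix.sub_apply]
    ring
  set d₁ : Fin n → ℝ := w₁ - (O 0 0 • u₁ + O 1 0 • u₂) with hd₁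
  set d₂ : Fin n → ℝ := w₂ - (O 0 1 • u₁ + O 1 1 • u₂) with hd₂
  have hnd1 : inner2 d₁ d₁ = 2 - 2 * (e11 * O 0 0 + e21 * O 1 0) := by
    rw [hd₁]
    simp only [inner2_sub_left, inner2_sub_right, inner2_add_left, inner2_add_right,
      inner2_smul_left, inner2_smul_right, h11, h22, h12, h21, hw11,
      hcomm1, hcomm2, ← he11, ← he21]
    linear_combination hOcol 0
  have hnd2 : inner2 d₂ d₂ = 2 - 2 * (e12 * O 0 1 + e22 * O 1 1) := by
    rw [hd₂]
    simp only [inner2_sub_left, inner2_sub_right, inner2_add_left, inner2_add_right,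
      inner2_smul_left, inner2_smul_right, h11, h22, h12, h21, hw22,
      hcomm3, hcomm4, ← he12, ← he22]
    linear_combination hOcol 1
  have hsum : ∑ i, ∑ j, D i j ^ 2 = inner2 d₁ d₁ + inner2 d₂ d₂ := by
    rw [Finset.sum_comm]
    rw [Fin.sum_univ_two]
    congr 1
    · simp only [inner2]
      apply Finset.sum_congr rfl
      intro i _
      rw [hDcol0 i, hd₁]
      simp only [Pi.sub_apply, Pi.add_apply, Pi.smul_apply, smul_eq_mul]
      ring
    · simp only [inner2]
      apply Finset.sum_congr rfl
      intro i _
      rw [hDcol1 i, hd₂]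
      simp only [Pi.sub_apply, Pi.add_apply, Pi.smul_apply, smul_eq_mul]
      ring
  have hfrob : specNorm D ≤ Real.sqrt (4 - 2*((e11 * O 0 0 + e21 * O 1 0) + (e12 * O 0 1 + e22 * O 1 1))) := by
    refine le_trans (specNorm_le_frob D) ?_
    apply Real.sqrt_le_sqrt
    rw [hsum, hnd1, hnd2]
    linarith
  have hlast : Real.sqrt (4 - 2*((e11 * O 0 0 + e21 * O 1 0) + (e12 * O 0 1 + e22 * O 1 1))) ≤ 2 * ε := by
    have h1 : 4 - 2*((e11 * O 0 0 + e21 * O 1 0) + (e12 * O 0 1 + e22 * O 1 1)) ≤ (2*ε)^2 := by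
      linarith [hOtr]
    calc Real.sqrt (4 - 2*((e11 * O 0 0 + e21 * O 1 0) + (e12 * O 0 1 + e22 * O 1 1)))
        ≤ Real.sqrt ((2*ε)^2) := Real.sqrt_le_sqrt h1
      _ = 2*ε := Real.sqrt_sq (by linarith)
  have hfinal : 2 * ε ≤ 3 * Δ / s := by
    have h2 : (2*Δ) / (s - Δ) ≤ 3 * Δ / s := by
      rw [div_le_div_iff₀ hsΔ hs]
      have h3 : 0 ≤ Δ * (s - 3*Δ) := mul_nonneg hΔ0 (by linarith)
      linarith [h3]
    calc 2 * (Δ / (s - Δ)) = (2*Δ)/(s-Δ) := by ring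
      _ ≤ 3 * Δ / s := h2
  calc specNorm D ≤ _ := hfrob
    _ ≤ 2 * ε := hlast
    _ ≤ 3 * Δ / s := hfinal


end Aux

/-- Lemma: existence of an aligning orthogonal matrix `O*`. -/
theorem stmt_12 {n : ℕ} (hn : 2 ≤ n) (M p η : ℝ) (hM : 0 < M)
    (hp : 0 < p) (hp1 : p ≤ 1) (hη : 0 < η) (hη1 : η ≤ 1)
    (r : Fin n → ℝ) (hr : ∀ i, 0 ≤ r i ∧ r i ≤ M)
    (e : Fin n → ℝ) (he : e = onesVec n)
    (α : ℝ) (hα : α = inner2 r e / n) (hne : r ≠ α • e)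
    (u₁ u₂ : Fin n → ℝ)
    (hu₁ : u₁ = (Real.sqrt n)⁻¹ • e)
    (hu₂ : u₂ = (norm2 (r - α • e))⁻¹ • (r - α • e))
    (C : Matrix (Fin n) (Fin n) ℝ) (hC : C = vecMulVec r e - vecMulVec e r)
    (Z : Matrix (Fin n) (Fin n) ℝ) (Δ : ℝ) (hZ : specNorm Z ≤ Δ)
    (H : Matrix (Fin n) (Fin n) ℝ) (hH : H = (η * p) • C + Z)
    (hΔ : Δ ≤ η * p * norm2 (r - α • e) * Real.sqrt n / 3)
    (σh₁ σh₂ : ℝ) (uh₁ uh₂ : Fin n → ℝ)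
    (htop : IsTopTwoSingular H σh₁ σh₂ uh₁ uh₂) :
    ∃ O : Matrix (Fin 2) (Fin 2) ℝ, Oᵀ * O = 1 ∧
      specNorm (twoCols uh₁ uh₂ - twoCols u₁ u₂ * O) ≤
        3 * Δ / (η * p * Real.sqrt n * norm2 (r - α • e)) := by
  -- setup
  have hn0 : (0:ℝ) < (n:ℝ) := by
    have : (0:ℕ) < n := lt_of_lt_of_le (by norm_num) hn
    exact_mod_cast this
  have hsqn : 0 < Real.sqrt n := Real.sqrt_pos.mpr hn0
  have hsqn2 : Real.sqrt n * Real.sqrt n = (n:ℝ) := Real.mul_self_sqrt (le_of_lt hn0)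
  have hrne : r - α • e ≠ 0 := sub_ne_zero.mpr hne
  set ρ := norm2 (r - α • e) with hρdef
  have hρ : 0 < ρ := Aux.norm2_pos_of_ne_zero hrne
  have hee : inner2 e e = (n:ℝ) := by
    simp [he, inner2, onesVec]
  have her : inner2 e r = inner2 r e := Aux.inner2_comm _ _
  have herα : inner2 e (r - α • e) = 0 := by
    rw [Aux.inner2_sub_right, Aux.inner2_smul_right, hee, her, hα]
    field_simp
    ring
  -- orthonormality
  have h11 : inner2 u₁ u₁ = 1 := by
    rw [hu₁, Aux.inner2_smul_left, Aux.inner2_smul_right, hee]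
    field_simp
    rw [Real.sq_sqrt hn0.le]
  have h22 : inner2 u₂ u₂ = 1 := by
    rw [hu₂, Aux.inner2_smul_left, Aux.inner2_smul_right, ← Aux.sq_norm2, ← hρdef]
    field_simp
  have h12 : inner2 u₁ u₂ = 0 := by
    rw [hu₁, hu₂, Aux.inner2_smul_left, Aux.inner2_smul_right, herα]
    ring
  -- scale
  set s := η * p * ρ * Real.sqrt n with hsdef
  have hs : 0 < s := by
    apply mul_pos (mul_pos (mul_pos hη hp) hρ) hsqn
  have hΔ0 : 0 ≤ Δ := le_trans (Aux.specNorm_nonneg Z) hZ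
  have hΔs : 3 * Δ ≤ s := by
    rw [hsdef]
    have h1 : η * p * ρ * Real.sqrt n / 3 * 3 = η * p * ρ * Real.sqrt n := by ring
    nlinarith [hΔ]
  -- rewrite H
  have hHcore : H = s • (vecMulVec u₂ u₁ - vecMulVec u₁ u₂) + Z := by
    rw [hH, hC]
    congr 1
    ext i j
    simp only [Matrix.smul_apply, Matrix.sub_apply, Matrix.vecMulVec_apply, smul_eq_mul]
    have hui : ∀ k, u₁ k = (Real.sqrt n)⁻¹ := by
      intro k; rw [hu₁]; simp [he, onesVec]
    have hvi : ∀ k, u₂ k = ρ⁻¹ * (r k - α) := by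
      intro k; rw [hu₂]; simp [he, onesVec, ← hρdef]
    rw [hui i, hui j, hvi i, hvi j, he]
    simp only [onesVec]
    rw [hsdef]
    field_simp
    ring
  -- apply the core lemma
  have hZ' : ∀ x, norm2 (Z.mulVec x) ≤ Δ * norm2 x := fun x =>
    le_trans (Aux.norm2_mulVec_le Z x) (mul_le_mul_of_nonneg_right hZ (Aux.norm2_nonneg x))
  have hZt' : ∀ x, norm2 (Zᵀ.mulVec x) ≤ Δ * norm2 x := fun x =>
    le_trans (Aux.norm2_transpose_mulVec_le Z x) (mul_le_mul_of_nonneg_right hZ (Aux.norm2_nonneg x))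
  obtain ⟨O, hO1, hO2⟩ := Aux.core u₁ u₂ h11 h22 h12 s Δ hs hΔ0 hΔs Z H hZ' hZt' hHcore
    σh₁ σh₂ uh₁ uh₂ htop
  refine ⟨O, hO1, ?_⟩
  have hseq : η * p * Real.sqrt n * norm2 (r - α • e) = s := by
    rw [hsdef, ← hρdef]; ring
  rw [hseq]
  exact hO2


end
end

section
/- Let H = ηp C + Z with ‖Z‖₂ ≤ Δ, and set σ = ηp·√n·‖r − αe‖₂; suppose Δ ≤ σ/3. Let û₁, û₂ ∈ ℝ^n be orthonormal with H Hᵀ ûᵢ = σ̂ᵢ² ûᵢ, where σ̂₁ ≥ σ̂₂ are the two largest singular values of H; set Û = [û₁ û₂], Σ̂ = diag(σ̂₁, σ̂₂), and define E₅ = Z²·Û·Σ̂^{−2}. Then ‖E₅‖_max ≤ 27Δ³/(4σ³) + (9/(4σ²))·( ‖Z² u₁‖_∞ + ‖Z² u₂‖_∞ ). -/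
open Matrix MeasureTheory ProbabilityTheory Real

noncomputable section

section Aux

variable {n m : ℕ}

lemma norm2_nonneg (x : Fin n → ℝ) : 0 ≤ norm2 x := Real.sqrt_nonneg _

lemma inner2_self_nonneg (x : Fin n → ℝ) : 0 ≤ inner2 x x :=
  Finset.sum_nonneg fun i _ => mul_self_nonneg _

lemma norm2_sq (x : Fin n → ℝ) : norm2 x ^ 2 = inner2 x x := by
  rw [norm2, Real.sq_sqrt (by positivity)]
  simp [inner2, sq]

lemma inner2_comm (x y : Fin n → ℝ) : inner2 x y = inner2 y x := by
  simp [inner2, mul_comm]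

lemma inner2_add_left (x y z : Fin n → ℝ) : inner2 (x + y) z = inner2 x z + inner2 y z := by
  simp [inner2, add_mul, Finset.sum_add_distrib]

lemma inner2_sub_left (x y z : Fin n → ℝ) : inner2 (x - y) z = inner2 x z - inner2 y z := by
  simp [inner2, sub_mul, Finset.sum_sub_distrib]

lemma inner2_smul_left (c : ℝ) (x y : Fin n → ℝ) : inner2 (c • x) y = c * inner2 x y := by
  simp [inner2, Finset.mul_sum, mul_assoc]

lemma inner2_add_right (x y z : Fin n → ℝ) : inner2 x (y + z) = inner2 x y + inner2 x z := by
  rw [inner2_comm, inner2_add_left, inner2_comm y x, inner2_comm z x]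

lemma inner2_sub_right (x y z : Fin n → ℝ) : inner2 x (y - z) = inner2 x y - inner2 x z := by
  rw [inner2_comm, inner2_sub_left, inner2_comm y x, inner2_comm z x]

lemma inner2_smul_right (c : ℝ) (x y : Fin n → ℝ) : inner2 x (c • y) = c * inner2 x y := by
  rw [inner2_comm, inner2_smul_left, inner2_comm]

lemma abs_inner2_le (x y : Fin n → ℝ) : |inner2 x y| ≤ norm2 x * norm2 y := by
  have h := Finset.sum_mul_sq_le_sq_mul_sq Finset.univ x y
  rw [← Real.sqrt_sq_eq_abs, norm2, norm2, ← Real.sqrt_mul (by positivity)]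
  exact Real.sqrt_le_sqrt h

lemma norm2_zero : norm2 (0 : Fin n → ℝ) = 0 := by simp [norm2]

lemma norm2_eq_zero {x : Fin n → ℝ} (h : norm2 x = 0) : x = 0 := by
  have h2 : (∑ i, x i ^ 2) = 0 := by
    have h1 := norm2_sq x
    rw [h] at h1
    have h3 : inner2 x x = 0 := by simpa using h1.symm
    simpa [inner2, pow_two] using h3
  funext i
  have h4 := (Finset.sum_eq_zero_iff_of_nonneg (fun i _ => sq_nonneg (x i))).mp h2 i (Finset.mem_univ i)
  simpa using pow_eq_zero_iff two_ne_zero |>.mp h4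

lemma norm2_smul (c : ℝ) (x : Fin n → ℝ) : norm2 (c • x) = |c| * norm2 x := by
  unfold norm2
  rw [← Real.sqrt_sq_eq_abs, ← Real.sqrt_mul (sq_nonneg c), Finset.mul_sum]
  congr 1
  apply Finset.sum_congr rfl
  intro i _
  simp [mul_pow]

lemma norm2_add_le (x y : Fin n → ℝ) : norm2 (x + y) ≤ norm2 x + norm2 y := by
  have h1 : inner2 (x + y) (x + y) ≤ (norm2 x + norm2 y) ^ 2 := by
    rw [inner2_add_left, inner2_add_right, inner2_add_right]
    have hcs := abs_inner2_le x y
    have hx := norm2_sq x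
    have hy := norm2_sq y
    have := abs_le.mp hcs
    rw [inner2_comm y x]
    nlinarith
  calc norm2 (x + y) = Real.sqrt (inner2 (x + y) (x + y)) := by
        rw [← norm2_sq, Real.sqrt_sq (norm2_nonneg _)]
    _ ≤ Real.sqrt ((norm2 x + norm2 y) ^ 2) := Real.sqrt_le_sqrt h1
    _ = norm2 x + norm2 y := Real.sqrt_sq (add_nonneg (norm2_nonneg x) (norm2_nonneg y))

lemma abs_apply_le_norm2 (x : Fin n → ℝ) (i : Fin n) : |x i| ≤ norm2 x := by
  rw [← Real.sqrt_sq_eq_abs, norm2]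
  apply Real.sqrt_le_sqrt
  exact Finset.single_le_sum (fun j _ => sq_nonneg (x j)) (Finset.mem_univ i)

lemma abs_le_normInf (x : Fin n → ℝ) (i : Fin n) : |x i| ≤ normInf x :=
  le_ciSup (f := fun i => |x i|) (Set.Finite.bddAbove (Set.finite_range _)) i

lemma normInf_nonneg (hn : 0 < n) (x : Fin n → ℝ) : 0 ≤ normInf x :=
  le_trans (abs_nonneg _) (abs_le_normInf x ⟨0, hn⟩)

lemma inner2_mulVec (A : Matrix (Fin m) (Fin n) ℝ) (x : Fin n → ℝ) (y : Fin m → ℝ) :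
    inner2 (A.mulVec x) y = inner2 x (Aᵀ.mulVec y) := by
  simp only [inner2, Matrix.mulVec, dotProduct, Matrix.transpose_apply,
    Finset.sum_mul, Finset.mul_sum]
  rw [Finset.sum_comm]
  apply Finset.sum_congr rfl; intro i _
  apply Finset.sum_congr rfl; intro j _
  ring

lemma specNorm_bddAbove (A : Matrix (Fin m) (Fin n) ℝ) :
    BddAbove (Set.range fun x : {x : Fin n → ℝ // norm2 x ≤ 1} => norm2 (A.mulVec x.1)) := by
  refine ⟨Real.sqrt (∑ i, ∑ j, A i j ^ 2), ?_⟩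
  rintro _ ⟨⟨x, hx⟩, rfl⟩
  simp only
  unfold norm2
  apply Real.sqrt_le_sqrt
  have hx2 : (∑ j, x j ^ 2) ≤ 1 := by
    have h1 : norm2 x ^ 2 ≤ 1 := by nlinarith [norm2_nonneg x]
    rw [norm2_sq] at h1
    simpa [inner2, pow_two] using h1
  calc (∑ i, A.mulVec x i ^ 2) = ∑ i, (∑ j, A i j * x j) ^ 2 := by
        simp [Matrix.mulVec, dotProduct]
    _ ≤ ∑ i, ((∑ j, A i j ^ 2) * ∑ j, x j ^ 2) := by
        apply Finset.sum_le_sum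
        intro i _
        exact Finset.sum_mul_sq_le_sq_mul_sq Finset.univ (fun j => A i j) x
    _ ≤ ∑ i, ∑ j, A i j ^ 2 := by
        apply Finset.sum_le_sum
        intro i _
        have h0 : (0:ℝ) ≤ ∑ j, A i j ^ 2 := by positivity
        nlinarith

lemma specNorm_nonneg (A : Matrix (Fin m) (Fin n) ℝ) : 0 ≤ specNorm A := by
  have := le_ciSup (specNorm_bddAbove A) ⟨0, by simp [norm2_zero]⟩
  simp [Matrix.mulVec_zero, norm2_zero] at this
  exact this

lemma norm2_mulVec_le (A : Matrix (Fin m) (Fin n) ℝ) (x : Fin n → ℝ) :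
    norm2 (A.mulVec x) ≤ specNorm A * norm2 x := by
  rcases eq_or_lt_of_le (norm2_nonneg x) with h | h
  · have hx : x = 0 := norm2_eq_zero h.symm
    subst hx
    simp [Matrix.mulVec_zero, norm2_zero]
  · have hx1 : norm2 ((norm2 x)⁻¹ • x) ≤ 1 := by
      rw [norm2_smul, abs_of_pos (inv_pos.mpr h), inv_mul_cancel₀ (ne_of_gt h)]
    have hle := le_ciSup (specNorm_bddAbove A) ⟨(norm2 x)⁻¹ • x, hx1⟩
    rw [show ((⟨(norm2 x)⁻¹ • x, hx1⟩ : {x : Fin n → ℝ // norm2 x ≤ 1}).1) = (norm2 x)⁻¹ • x from rfl,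
      Matrix.mulVec_smul, norm2_smul, abs_of_pos (inv_pos.mpr h)] at hle
    rw [← specNorm] at hle
    calc norm2 (A.mulVec x) = norm2 x * ((norm2 x)⁻¹ * norm2 (A.mulVec x)) := by
          field_simp
      _ ≤ norm2 x * specNorm A := by
          apply mul_le_mul_of_nonneg_left hle (le_of_lt h)
      _ = specNorm A * norm2 x := mul_comm _ _

lemma norm2_transpose_mulVec_le (A : Matrix (Fin n) (Fin n) ℝ) (x : Fin n → ℝ) :
    norm2 (Aᵀ.mulVec x) ≤ specNorm A * norm2 x := by
  have h1 : norm2 (Aᵀ.mulVec x) ^ 2 = inner2 (A.mulVec (Aᵀ.mulVec x)) x := by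
    rw [norm2_sq, inner2_mulVec A (Aᵀ.mulVec x) x]
  have h2 : inner2 (A.mulVec (Aᵀ.mulVec x)) x ≤ specNorm A * norm2 (Aᵀ.mulVec x) * norm2 x := by
    calc inner2 (A.mulVec (Aᵀ.mulVec x)) x ≤ |inner2 (A.mulVec (Aᵀ.mulVec x)) x| := le_abs_self _
      _ ≤ norm2 (A.mulVec (Aᵀ.mulVec x)) * norm2 x := abs_inner2_le _ _
      _ ≤ specNorm A * norm2 (Aᵀ.mulVec x) * norm2 x := by
          apply mul_le_mul_of_nonneg_right (norm2_mulVec_le _ _) (norm2_nonneg _)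
  rcases eq_or_lt_of_le (norm2_nonneg (Aᵀ.mulVec x)) with h | h
  · rw [← h]; exact mul_nonneg (specNorm_nonneg A) (norm2_nonneg x)
  · nlinarith [h1, h2]

lemma vecMulVec_mulVec' (u : Fin n → ℝ) (v : Fin n → ℝ) (x : Fin n → ℝ) :
    (Matrix.vecMulVec u v).mulVec x = inner2 v x • u := by
  funext i
  simp only [Matrix.mulVec, dotProduct, Matrix.vecMulVec_apply, inner2, Pi.smul_apply,
    smul_eq_mul, Finset.sum_mul]
  apply Finset.sum_congr rfl
  intro j _
  ring

end Aux

section Aux2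

variable {n : ℕ}

lemma norm2_eq_sqrt (x : Fin n → ℝ) : norm2 x = Real.sqrt (inner2 x x) := by
  rw [← norm2_sq, Real.sqrt_sq (norm2_nonneg _)]

lemma norm2_neg (x : Fin n → ℝ) : norm2 (-x) = norm2 x := by
  unfold norm2
  congr 1
  apply Finset.sum_congr rfl
  intro i _
  simp [Pi.neg_apply]

lemma inner2_combo {u v : Fin n → ℝ} (huu : inner2 u u = 1) (hvv : inner2 v v = 1)
    (huv : inner2 u v = 0) (a b : ℝ) :
    inner2 (a • u + b • v) (a • u + b • v) = a ^ 2 + b ^ 2 := by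
  have hvu : inner2 v u = 0 := by rw [inner2_comm]; exact huv
  simp only [inner2_add_left, inner2_add_right, inner2_smul_left, inner2_smul_right,
    huu, hvv, huv, hvu]
  ring

lemma norm2_combo {u v : Fin n → ℝ} (huu : inner2 u u = 1) (hvv : inner2 v v = 1)
    (huv : inner2 u v = 0) (a b : ℝ) :
    norm2 (a • u + b • v) = Real.sqrt (a ^ 2 + b ^ 2) := by
  rw [norm2_eq_sqrt, inner2_combo huu hvv huv]

end Aux2

lemma perp_norm_le {n : ℕ} {u v : Fin n → ℝ} (huu : inner2 u u = 1) (hvv : inner2 v v = 1)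
    (huv : inner2 u v = 0) (x : Fin n → ℝ) :
    norm2 (x - inner2 x u • u - inner2 x v • v) ≤ norm2 x := by
  have hvu : inner2 v u = 0 := by rw [inner2_comm]; exact huv
  have hux : inner2 u x = inner2 x u := inner2_comm u x
  have hvx : inner2 v x = inner2 x v := inner2_comm v x
  have hkey : inner2 (x - inner2 x u • u - inner2 x v • v) (x - inner2 x u • u - inner2 x v • v)
      = inner2 x x - inner2 x u ^ 2 - inner2 x v ^ 2 := by
    simp only [inner2_sub_left, inner2_sub_right, inner2_smul_left, inner2_smul_right,
      huu, hvv, huv, hvu, hux, hvx]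
    ring
  rw [norm2_eq_sqrt, norm2_eq_sqrt, hkey]
  apply Real.sqrt_le_sqrt
  nlinarith [sq_nonneg (inner2 x u), sq_nonneg (inner2 x v)]


set_option maxHeartbeats 2000000 in
/-- Lemma: max-norm bound on `E₅`. -/
theorem stmt_15 {n : ℕ} (hn : 2 ≤ n) (M p η : ℝ) (hM : 0 < M)
    (hp : 0 < p) (hp1 : p ≤ 1) (hη : 0 < η) (hη1 : η ≤ 1)
    (r : Fin n → ℝ) (hr : ∀ i, 0 ≤ r i ∧ r i ≤ M)
    (e : Fin n → ℝ) (he : e = onesVec n)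
    (α : ℝ) (hα : α = inner2 r e / n) (hne : r ≠ α • e)
    (u₁ u₂ : Fin n → ℝ)
    (hu₁ : u₁ = (Real.sqrt n)⁻¹ • e)
    (hu₂ : u₂ = (norm2 (r - α • e))⁻¹ • (r - α • e))
    (C : Matrix (Fin n) (Fin n) ℝ) (hC : C = vecMulVec r e - vecMulVec e r)
    (Z : Matrix (Fin n) (Fin n) ℝ) (Δ : ℝ) (hZ : specNorm Z ≤ Δ)
    (H : Matrix (Fin n) (Fin n) ℝ) (hH : H = (η * p) • C + Z)
    (σ : ℝ) (hσ : σ = η * p * Real.sqrt n * norm2 (r - α • e))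
    (hΔ : Δ ≤ σ / 3)
    (σh₁ σh₂ : ℝ) (uh₁ uh₂ : Fin n → ℝ)
    (htop : IsTopTwoSingular H σh₁ σh₂ uh₁ uh₂)
    (E₅ : Matrix (Fin n) (Fin 2) ℝ)
    (hE₅ : E₅ = Z * Z * twoCols uh₁ uh₂ *
        Matrix.diagonal ![(σh₁ ^ 2)⁻¹, (σh₂ ^ 2)⁻¹]) :
    maxNorm E₅ ≤ 27 * Δ ^ 3 / (4 * σ ^ 3) +
      9 / (4 * σ ^ 2) *
        (normInf ((Z * Z).mulVec u₁) + normInf ((Z * Z).mulVec u₂)) := by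
  obtain ⟨hσ2nn, hσ21, h1h1, h2h2, h1h2, hHuh1, hHuh2, hmin⟩ := htop
  have hn0 : 0 < n := lt_of_lt_of_le two_pos hn
  have hnR : (0:ℝ) < n := by exact_mod_cast hn0
  have hnne : (n:ℝ) ≠ 0 := ne_of_gt hnR
  have hsqn : (0:ℝ) < Real.sqrt n := Real.sqrt_pos.mpr hnR
  have hsq : Real.sqrt n * Real.sqrt n = (n:ℝ) := Real.mul_self_sqrt hnR.le
  set s := norm2 (r - α • e) with hsdef
  have hrne : r - α • e ≠ 0 := sub_ne_zero.mpr hne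
  have hs0 : 0 < s :=
    lt_of_le_of_ne (norm2_nonneg _) (fun h => hrne (norm2_eq_zero h.symm))
  have hee : inner2 e e = n := by simp [he, onesVec, inner2]
  have hre : inner2 r e = n * α := by
    rw [hα, mul_comm, div_mul_cancel₀ _ hnne]
  have hσ0 : 0 < σ := by
    rw [hσ]
    have := mul_pos (mul_pos (mul_pos hη hp) hsqn) hs0
    exact this
  have hΔ0 : 0 ≤ Δ := le_trans (specNorm_nonneg Z) hZ
  -- orthonormality of u₁, u₂
  have hu11 : inner2 u₁ u₁ = 1 := by
    rw [hu₁, inner2_smul_left, inner2_smul_right, hee, ← hsq]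
    field_simp
    rw [Real.sqrt_sq hsqn.le]
  have hrr' : inner2 (r - α • e) (r - α • e) = s ^ 2 := (norm2_sq _).symm
  have he2 : inner2 e (r - α • e) = 0 := by
    rw [inner2_sub_right, inner2_smul_right, hee, inner2_comm e r, hre]; ring
  have hu22 : inner2 u₂ u₂ = 1 := by
    rw [hu₂, inner2_smul_left, inner2_smul_right, hrr']
    field_simp
  have hu12 : inner2 u₁ u₂ = 0 := by
    rw [hu₁, hu₂, inner2_smul_left, inner2_smul_right, he2]; ring
  have hu21 : inner2 u₂ u₁ = 0 := by rw [inner2_comm]; exact hu12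
  have hnu1 : norm2 u₁ = 1 := by
    rw [norm2_eq_sqrt, hu11, Real.sqrt_one]
  have hnu2 : norm2 u₂ = 1 := by
    rw [norm2_eq_sqrt, hu22, Real.sqrt_one]
  have heu : e = Real.sqrt n • u₁ := by
    rw [hu₁, smul_smul, mul_inv_cancel₀ hsqn.ne', one_smul]
  have hru : r - α • e = s • u₂ := by
    rw [hu₂, smul_smul, mul_inv_cancel₀ hs0.ne', one_smul]
  -- action of C
  have hCx : ∀ x, C.mulVec x = inner2 e x • r - inner2 r x • e := by
    intro x
    rw [hC, Matrix.sub_mulVec, vecMulVec_mulVec', vecMulVec_mulVec']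
  have hCT : Cᵀ = -C := by
    rw [hC]
    ext i j
    simp [Matrix.vecMulVec_apply, mul_comm]
  -- inner products with u's
  have heu1 : inner2 e u₁ = Real.sqrt n := by
    rw [hu₁, inner2_smul_right, hee, ← hsq]; field_simp; rw [Real.sqrt_sq hsqn.le]
  have hru1 : inner2 r u₁ = Real.sqrt n * α := by
    rw [hu₁, inner2_smul_right, hre]
    field_simp
    linear_combination (-α) * hsq
  have heu2 : inner2 e u₂ = 0 := by
    rw [hu₂, inner2_smul_right, he2]; ring
  have hru2 : inner2 r u₂ = s := by
    have hsplit : r = (r - α • e) + α • e := by abel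
    have hr2 : inner2 r (r - α • e) = s ^ 2 := by
      calc inner2 r (r - α • e) = inner2 ((r - α • e) + α • e) (r - α • e) := by rw [← hsplit]
        _ = inner2 (r - α • e) (r - α • e) + α * inner2 e (r - α • e) := by
            rw [inner2_add_left, inner2_smul_left]
        _ = s ^ 2 := by rw [hrr', he2]; ring
    rw [hu₂, inner2_smul_right, hr2]
    field_simp
  -- action of A = (η*p) • C on u₁, u₂
  have hAu1 : ((η * p) • C).mulVec u₁ = σ • u₂ := by
    rw [Matrix.smul_mulVec, hCx, heu1, hru1, hσ]
    have : r = s • u₂ + α • e := by rw [← hru]; abel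
    rw [this, heu]
    module
  have hAu2 : ((η * p) • C).mulVec u₂ = (-σ) • u₁ := by
    rw [Matrix.smul_mulVec, hCx, heu2, hru2, hσ, heu]
    module
  -- span property of A
  have hspan : ∀ x, ∃ c₁ c₂ : ℝ, ((η * p) • C).mulVec x = c₁ • u₁ + c₂ • u₂ := by
    intro x
    refine ⟨η * p * (inner2 e x * α * Real.sqrt n - inner2 r x * Real.sqrt n),
      η * p * (inner2 e x * s), ?_⟩
    rw [Matrix.smul_mulVec, hCx]
    funext i
    have hei : e i = Real.sqrt n * u₁ i := by rw [heu]; simp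
    have hri : r i = s * u₂ i + α * e i := by
      have := congrFun hru i
      simp only [Pi.sub_apply, Pi.smul_apply, smul_eq_mul] at this
      linarith
    simp only [Pi.smul_apply, Pi.add_apply, Pi.sub_apply, smul_eq_mul]
    rw [hri, hei]
    ring
  -- Rayleigh identities
  have hRay : ∀ v, inner2 ((H * Hᵀ).mulVec v) v = norm2 (Hᵀ.mulVec v) ^ 2 := by
    intro v
    rw [← Matrix.mulVec_mulVec, inner2_mulVec H (Hᵀ.mulVec v) v, norm2_sq]
  have hsymm : ∀ x y, inner2 ((H * Hᵀ).mulVec x) y = inner2 x ((H * Hᵀ).mulVec y) := by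
    intro x y
    rw [inner2_mulVec, Matrix.transpose_mul, Matrix.transpose_transpose]
  -- H transpose decomposition
  have hHT : ∀ v, Hᵀ.mulVec v = -(((η * p) • C).mulVec v) + Zᵀ.mulVec v := by
    intro v
    rw [hH, Matrix.transpose_add, Matrix.transpose_smul, hCT, Matrix.add_mulVec, smul_neg,
      Matrix.neg_mulVec]
  have hZv : ∀ v : Fin n → ℝ, norm2 (Z.mulVec v) ≤ Δ * norm2 v := fun v =>
    le_trans (norm2_mulVec_le Z v) (mul_le_mul_of_nonneg_right hZ (norm2_nonneg v))
  have hZTv : ∀ v : Fin n → ℝ, norm2 (Zᵀ.mulVec v) ≤ Δ * norm2 v := fun v =>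
    le_trans (norm2_transpose_mulVec_le Z v) (mul_le_mul_of_nonneg_right hZ (norm2_nonneg v))
  -- lower bound on σh₂
  have hσ2lb : σ - Δ ≤ σh₂ := by
    obtain ⟨a1, b1, hab1, hvperp⟩ :
        ∃ a b : ℝ, a ^ 2 + b ^ 2 = 1 ∧ inner2 (a • u₁ + b • u₂) uh₁ = 0 := by
      by_cases hcase : inner2 u₁ uh₁ = 0 ∧ inner2 u₂ uh₁ = 0
      · refine ⟨1, 0, by norm_num, ?_⟩
        simp only [inner2_add_left, inner2_smul_left, hcase.1, hcase.2]
        ring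
      · set a := inner2 u₁ uh₁ with hadef
        set b := inner2 u₂ uh₁ with hbdef
        have habpos : 0 < a ^ 2 + b ^ 2 := by
          rcases not_and_or.mp hcase with ha | ha
          · have h2 : 0 < a ^ 2 := lt_of_le_of_ne (sq_nonneg a) (Ne.symm (pow_ne_zero 2 ha))
            nlinarith only [h2, sq_nonneg b]
          · have h2 : 0 < b ^ 2 := lt_of_le_of_ne (sq_nonneg b) (Ne.symm (pow_ne_zero 2 ha))
            nlinarith only [h2, sq_nonneg a]
        set t := Real.sqrt (a ^ 2 + b ^ 2) with htdef
        have ht : t ^ 2 = a ^ 2 + b ^ 2 := Real.sq_sqrt habpos.le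
        have ht0 : 0 < t := Real.sqrt_pos.mpr habpos
        refine ⟨b / t, -a / t, ?_, ?_⟩
        · field_simp
          linarith only [ht]
        · simp only [inner2_add_left, inner2_smul_left, ← hadef, ← hbdef]
          ring
    set v := a1 • u₁ + b1 • u₂ with hvdef
    have hvv : inner2 v v = 1 := by rw [hvdef, inner2_combo hu11 hu22 hu12, hab1]
    have hnv : norm2 v = 1 := by rw [norm2_eq_sqrt, hvv, Real.sqrt_one]
    have hAv : ((η * p) • C).mulVec v = (-(b1 * σ)) • u₁ + (a1 * σ) • u₂ := by
      rw [hvdef, Matrix.mulVec_add, Matrix.mulVec_smul, Matrix.mulVec_smul, hAu1, hAu2]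
      module
    have hnAv : norm2 (((η * p) • C).mulVec v) = σ := by
      rw [hAv, norm2_combo hu11 hu22 hu12]
      rw [show (-(b1 * σ)) ^ 2 + (a1 * σ) ^ 2 = σ ^ 2 by linear_combination (σ ^ 2) * hab1]
      exact Real.sqrt_sq hσ0.le
    have hHv : σ - Δ ≤ norm2 (Hᵀ.mulVec v) := by
      have hATv : ((η * p) • C).mulVec v = Zᵀ.mulVec v + -(Hᵀ.mulVec v) := by
        rw [hHT v]; abel
      have h1 : norm2 (((η * p) • C).mulVec v) ≤ norm2 (Zᵀ.mulVec v) + norm2 (Hᵀ.mulVec v) := by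
        calc norm2 (((η * p) • C).mulVec v) = norm2 (Zᵀ.mulVec v + -(Hᵀ.mulVec v)) := by
              rw [hATv]
          _ ≤ norm2 (Zᵀ.mulVec v) + norm2 (-(Hᵀ.mulVec v)) := norm2_add_le _ _
          _ = norm2 (Zᵀ.mulVec v) + norm2 (Hᵀ.mulVec v) := by rw [norm2_neg]
      have h2 : norm2 (Zᵀ.mulVec v) ≤ Δ := by
        have h3 := hZTv v
        rw [hnv, mul_one] at h3
        exact h3
      rw [hnAv] at h1
      linarith only [h1, h2]
    have h2h1 : inner2 uh₂ uh₁ = 0 := by rw [inner2_comm]; exact h1h2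
    set c := inner2 v uh₂ with hcdef
    set w := v - c • uh₂ with hwdef
    have hw1 : inner2 w uh₁ = 0 := by
      rw [hwdef, inner2_sub_left, inner2_smul_left, hvperp, h2h1]
      ring
    have hw2 : inner2 w uh₂ = 0 := by
      rw [hwdef, inner2_sub_left, inner2_smul_left, h2h2]
      ring
    have huw : inner2 uh₂ w = 0 := by rw [inner2_comm]; exact hw2
    have hww : inner2 w w = 1 - c ^ 2 := by
      have hc2 : inner2 uh₂ v = c := by rw [inner2_comm]
      rw [hwdef]
      simp only [inner2_sub_left, inner2_sub_right, inner2_smul_left, inner2_smul_right,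
        hvv, h2h2, hc2]
      ring
    have hdecomp : v = c • uh₂ + w := by rw [hwdef]; abel
    have hRv : inner2 ((H * Hᵀ).mulVec v) v ≤ σh₂ ^ 2 := by
      have hmul : (H * Hᵀ).mulVec v = c • (σh₂ ^ 2 • uh₂) + (H * Hᵀ).mulVec w := by
        conv_lhs => rw [hdecomp]
        rw [Matrix.mulVec_add, Matrix.mulVec_smul, hHuh2]
      have hterm : inner2 ((H * Hᵀ).mulVec w) uh₂ = 0 := by
        rw [hsymm w uh₂, hHuh2, inner2_smul_right, hw2, mul_zero]
      have hcalc : inner2 ((H * Hᵀ).mulVec v) v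
          = c ^ 2 * σh₂ ^ 2 + inner2 ((H * Hᵀ).mulVec w) w := by
        conv_lhs => rw [hmul, hdecomp]
        simp only [inner2_add_left, inner2_add_right, inner2_smul_left, inner2_smul_right,
          h2h2, hterm, huw]
        ring
      have hlast := hmin w hw1 hw2
      rw [hww] at hlast
      rw [hcalc]
      nlinarith only [hlast, sq_nonneg c, sq_nonneg σh₂]
    have hlow : (σ - Δ) ^ 2 ≤ inner2 ((H * Hᵀ).mulVec v) v := by
      rw [hRay v]
      have h0 : 0 ≤ σ - Δ := by linarith only [hΔ, hσ0]
      nlinarith only [hHv, h0, norm2_nonneg (Hᵀ.mulVec v)]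
    have h0 : 0 ≤ σ - Δ := by linarith only [hΔ, hσ0]
    nlinarith only [hlow.trans hRv, hσ2nn, h0]
  have hσlb : 2 * σ / 3 ≤ σh₂ := by linarith only [hσ2lb, hΔ]
  have hσlb1 : 2 * σ / 3 ≤ σh₁ := le_trans hσlb hσ21
  -- key per-column bound
  have key : ∀ (σh : ℝ) (uh : Fin n → ℝ), 2 * σ / 3 ≤ σh → inner2 uh uh = 1 →
      (H * Hᵀ).mulVec uh = σh ^ 2 • uh → ∀ i,
      |((Z * Z).mulVec uh) i| * (σh ^ 2)⁻¹ ≤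
        27 * Δ ^ 3 / (4 * σ ^ 3) +
          9 / (4 * σ ^ 2) * (normInf ((Z * Z).mulVec u₁) + normInf ((Z * Z).mulVec u₂)) := by
    intro σh uh hσh huh hHuh i
    have hσhpos : 0 < σh := lt_of_lt_of_le (by linarith only [hσ0]) hσh
    have hnuh : norm2 uh = 1 := by rw [norm2_eq_sqrt, huh, Real.sqrt_one]
    set a := inner2 uh u₁ with hadef
    set b := inner2 uh u₂ with hbdef
    have ha1 : |a| ≤ 1 := by
      have h := abs_inner2_le uh u₁
      rw [hnuh, hnu1, one_mul] at h
      exact h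
    have hb1 : |b| ≤ 1 := by
      have h := abs_inner2_le uh u₂
      rw [hnuh, hnu2, one_mul] at h
      exact h
    set w := uh - a • u₁ - b • u₂ with hwdef
    have hnHTuh : norm2 (Hᵀ.mulVec uh) = σh := by
      have h1 : norm2 (Hᵀ.mulVec uh) ^ 2 = σh ^ 2 := by
        rw [← hRay uh, hHuh, inner2_smul_left, huh, mul_one]
      calc norm2 (Hᵀ.mulVec uh) = Real.sqrt (norm2 (Hᵀ.mulVec uh) ^ 2) :=
            (Real.sqrt_sq (norm2_nonneg _)).symm
        _ = Real.sqrt (σh ^ 2) := by rw [h1]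
        _ = σh := Real.sqrt_sq hσhpos.le
    have hPzero : ∀ y0 : Fin n → ℝ,
        (((η * p) • C).mulVec y0) - inner2 (((η * p) • C).mulVec y0) u₁ • u₁
          - inner2 (((η * p) • C).mulVec y0) u₂ • u₂ = 0 := by
      intro y0
      obtain ⟨c₁, c₂, hc⟩ := hspan y0
      rw [hc]
      simp only [inner2_add_left, inner2_smul_left, hu11, hu22, hu12, hu21]
      module
    set y := Hᵀ.mulVec uh with hydef
    have hHy : H.mulVec y = σh ^ 2 • uh := by
      rw [hydef, Matrix.mulVec_mulVec, hHuh]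
    have hsplitH : H.mulVec y = ((η * p) • C).mulVec y + Z.mulVec y := by
      rw [hH, Matrix.add_mulVec]
    have hs' : σh ^ 2 • uh = ((η * p) • C).mulVec y + Z.mulVec y := by
      rw [← hsplitH, hHy]
    have ha' : σh ^ 2 * a = inner2 (((η * p) • C).mulVec y) u₁ + inner2 (Z.mulVec y) u₁ := by
      rw [← inner2_add_left, ← hs', inner2_smul_left]
    have hb' : σh ^ 2 * b = inner2 (((η * p) • C).mulVec y) u₂ + inner2 (Z.mulVec y) u₂ := by
      rw [← inner2_add_left, ← hs', inner2_smul_left]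
    have hperp : σh ^ 2 • w =
        ((((η * p) • C).mulVec y) - inner2 (((η * p) • C).mulVec y) u₁ • u₁
          - inner2 (((η * p) • C).mulVec y) u₂ • u₂)
        + (Z.mulVec y - inner2 (Z.mulVec y) u₁ • u₁ - inner2 (Z.mulVec y) u₂ • u₂) := by
      rw [hwdef, smul_sub, smul_sub, smul_smul, smul_smul, hs', ha', hb']
      module
    have hperpnorm : σh ^ 2 * norm2 w ≤ Δ * σh := by
      have h1 : norm2 (σh ^ 2 • w) = σh ^ 2 * norm2 w := by
        rw [norm2_smul, abs_of_nonneg (sq_nonneg σh)]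
      have h2 : norm2 (σh ^ 2 • w) ≤ norm2 (Z.mulVec y) := by
        rw [hperp, hPzero y, zero_add]
        exact perp_norm_le hu11 hu22 hu12 _
      have h3 : norm2 (Z.mulVec y) ≤ Δ * σh := by
        have h4 := hZv y
        rw [hydef] at h4 ⊢
        rw [hnHTuh] at h4
        exact h4
      linarith only [h1, h2, h3]
    have hwnorm : norm2 w ≤ Δ / σh := by
      rw [le_div_iff₀ hσhpos]
      nlinarith only [hperpnorm, hσhpos, norm2_nonneg w]
    have hdecomp : uh = a • u₁ + b • u₂ + w := by rw [hwdef]; abel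
    have hentry : ((Z * Z).mulVec uh) i
        = a * ((Z * Z).mulVec u₁) i + b * ((Z * Z).mulVec u₂) i + ((Z * Z).mulVec w) i := by
      conv_lhs => rw [hdecomp]
      rw [Matrix.mulVec_add, Matrix.mulVec_add, Matrix.mulVec_smul, Matrix.mulVec_smul]
      simp [Pi.add_apply, Pi.smul_apply, smul_eq_mul]
    have hZZw : |((Z * Z).mulVec w) i| ≤ Δ ^ 2 * (Δ / σh) := by
      calc |((Z * Z).mulVec w) i| ≤ norm2 ((Z * Z).mulVec w) := abs_apply_le_norm2 _ i
        _ = norm2 (Z.mulVec (Z.mulVec w)) := by rw [Matrix.mulVec_mulVec]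
        _ ≤ Δ * norm2 (Z.mulVec w) := hZv _
        _ ≤ Δ * (Δ * norm2 w) := mul_le_mul_of_nonneg_left (hZv w) hΔ0
        _ = Δ ^ 2 * norm2 w := by ring
        _ ≤ Δ ^ 2 * (Δ / σh) := mul_le_mul_of_nonneg_left hwnorm (sq_nonneg Δ)
    set N1 := normInf ((Z * Z).mulVec u₁) with hN1def
    set N2 := normInf ((Z * Z).mulVec u₂) with hN2def
    have hN1 : |((Z * Z).mulVec u₁) i| ≤ N1 := abs_le_normInf _ i
    have hN2 : |((Z * Z).mulVec u₂) i| ≤ N2 := abs_le_normInf _ i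
    have hN1n : 0 ≤ N1 := normInf_nonneg hn0 _
    have hN2n : 0 ≤ N2 := normInf_nonneg hn0 _
    have habs : |((Z * Z).mulVec uh) i| ≤ N1 + N2 + Δ ^ 3 / σh := by
      rw [hentry]
      have t1 := abs_add_le (a * ((Z * Z).mulVec u₁) i + b * ((Z * Z).mulVec u₂) i)
        (((Z * Z).mulVec w) i)
      have t2 := abs_add_le (a * ((Z * Z).mulVec u₁) i) (b * ((Z * Z).mulVec u₂) i)
      have t3 : |a * ((Z * Z).mulVec u₁) i| ≤ N1 := by
        rw [abs_mul]
        calc |a| * |((Z * Z).mulVec u₁) i| ≤ 1 * N1 :=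
              mul_le_mul ha1 hN1 (abs_nonneg _) zero_le_one
          _ = N1 := one_mul _
      have t4 : |b * ((Z * Z).mulVec u₂) i| ≤ N2 := by
        rw [abs_mul]
        calc |b| * |((Z * Z).mulVec u₂) i| ≤ 1 * N2 :=
              mul_le_mul hb1 hN2 (abs_nonneg _) zero_le_one
          _ = N2 := one_mul _
      have t5 : Δ ^ 2 * (Δ / σh) = Δ ^ 3 / σh := by ring
      linarith only [t1, t2, t3, t4, t5 ▸ hZZw]
    have hσh2pos : 0 < σh ^ 2 := by positivity
    have hmono : |((Z * Z).mulVec uh) i| * (σh ^ 2)⁻¹ ≤ (N1 + N2 + Δ ^ 3 / σh) * (σh ^ 2)⁻¹ :=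
      mul_le_mul_of_nonneg_right habs (inv_nonneg.mpr hσh2pos.le)
    refine le_trans hmono ?_
    have hJle : σh⁻¹ ≤ 3 / (2 * σ) := by
      have h1 : (σh)⁻¹ ≤ (2 * σ / 3)⁻¹ := by
        apply inv_anti₀ (by linarith only [hσ0]) hσh
      calc σh⁻¹ ≤ (2 * σ / 3)⁻¹ := h1
        _ = 3 / (2 * σ) := by rw [inv_div]
    have hIle : (σh ^ 2)⁻¹ ≤ 9 / (4 * σ ^ 2) := by
      have h1 : 4 * σ ^ 2 / 9 ≤ σh ^ 2 := by nlinarith only [hσh, hσ0, sq_nonneg (σh - 2 * σ / 3)]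
      have h2 : (σh ^ 2)⁻¹ ≤ (4 * σ ^ 2 / 9)⁻¹ := by
        apply inv_anti₀ (by positivity) h1
      calc (σh ^ 2)⁻¹ ≤ (4 * σ ^ 2 / 9)⁻¹ := h2
        _ = 9 / (4 * σ ^ 2) := by rw [inv_div]
    have hsplit2 : (N1 + N2 + Δ ^ 3 / σh) * (σh ^ 2)⁻¹
        = (N1 + N2) * (σh ^ 2)⁻¹ + Δ ^ 3 * (σh⁻¹ * (σh ^ 2)⁻¹) := by
      rw [div_eq_mul_inv]
      ring
    rw [hsplit2]
    have e1 : (N1 + N2) * (σh ^ 2)⁻¹ ≤ 9 / (4 * σ ^ 2) * (N1 + N2) := by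
      rw [mul_comm (9 / (4 * σ ^ 2)) (N1 + N2)]
      exact mul_le_mul_of_nonneg_left hIle (by linarith only [hN1n, hN2n])
    have e2 : Δ ^ 3 * (σh⁻¹ * (σh ^ 2)⁻¹) ≤ 27 * Δ ^ 3 / (4 * σ ^ 3) := by
      have hprod : σh⁻¹ * (σh ^ 2)⁻¹ ≤ 3 / (2 * σ) * (9 / (4 * σ ^ 2)) :=
        mul_le_mul hJle hIle (inv_nonneg.mpr hσh2pos.le) (by positivity)
      have h3 : Δ ^ 3 * (σh⁻¹ * (σh ^ 2)⁻¹) ≤ Δ ^ 3 * (3 / (2 * σ) * (9 / (4 * σ ^ 2))) :=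
        mul_le_mul_of_nonneg_left hprod (by positivity)
      have h4 : Δ ^ 3 * (3 / (2 * σ) * (9 / (4 * σ ^ 2))) = 27 * Δ ^ 3 / (8 * σ ^ 3) := by
        ring
      have h5 : 27 * Δ ^ 3 / (8 * σ ^ 3) ≤ 27 * Δ ^ 3 / (4 * σ ^ 3) :=
        div_le_div_of_nonneg_left (by positivity) (by positivity)
          (by nlinarith only [pow_pos hσ0 3])
      linarith only [h4 ▸ h3, h5]
    linarith only [e1, e2]
  -- conclusion
  have hinst : Nonempty (Fin n × Fin 2) := ⟨(⟨0, hn0⟩, 0)⟩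
  unfold maxNorm
  apply ciSup_le
  intro q
  obtain ⟨i, j⟩ := q
  rw [hE₅, Matrix.mul_diagonal, abs_mul]
  fin_cases j
  · refine le_trans (le_of_eq ?_) (key σh₁ uh₁ hσlb1 h1h1 hHuh1 i)
    simp [Matrix.mul_apply, Matrix.mulVec, dotProduct, twoCols,
      abs_of_nonneg (inv_nonneg.mpr (sq_nonneg σh₁))]
  · refine le_trans (le_of_eq ?_) (key σh₂ uh₂ hσlb h2h2 hHuh2 i)
    simp [Matrix.mul_apply, Matrix.mulVec, dotProduct, twoCols,
      abs_of_nonneg (inv_nonneg.mpr (sq_nonneg σh₂))]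


end
end
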